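/- arXiv:1012.3777 — 2 statements merged into one kernel-verified Lean document; each statement's English description precedes it below -/
import Mathlib

section
/- Let Y be a scheme of finite type over Spec ℤ. If Y has an F̄_p-rational point for infinitely many primes p, then Y has a Q̄-rational point. -/
open AlgebraicGeometry CategoryTheory CategoryTheory.Limits

set_option synthInstance.maxHeartbeats 200000 in
/-- Key algebraic lemma: if `R` is a finite type `ℤ`-algebra admitting, for infinitely
many primes `p`, a ring homomorphism to some field of characteristic `p`, then `R` admits
a ring homomorphism to `AlgebraicClosure ℚ`. -/
lemma exists_ringHom_to_Qbar (R : Type) [CommRing R]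
    (hfg : (algebraMap ℤ R).FiniteType)
    (h : {p : ℕ | p.Prime ∧ ∃ (K : Type) (_ : Field K) (_ : CharP K p),
        Nonempty (R →+* K)}.Infinite) :
    Nonempty (R →+* AlgebraicClosure ℚ) := by
  classical
  -- Step 1: no nonzero integer dies in `R`.
  have hint : ∀ n : ℤ, (n : R) = 0 → n = 0 := by
    intro n hn
    by_contra hn0
    obtain ⟨p, ⟨hp, K, _, _, ⟨φ⟩⟩, hgt⟩ := h.exists_gt n.natAbs
    have hK : (n : K) = 0 := by
      have := congrArg φ hn
      rwa [map_intCast, map_zero] at this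
    have hdvd : (p : ℤ) ∣ n := (CharP.intCast_eq_zero_iff K p n).mp hK
    have hdvd' : p ∣ n.natAbs := by
      have := Int.natAbs_dvd_natAbs.mpr hdvd
      simpa using this
    exact absurd (Nat.le_of_dvd (Int.natAbs_pos.mpr hn0) hdvd') (not_le.mpr hgt)
  -- Step 2: localize away the nonzero integers.
  set T : Submonoid R :=
    Submonoid.map (Int.castRingHom R : ℤ →+* R).toMonoidHom (nonZeroDivisors ℤ) with hT
  have h0T : (0 : R) ∉ T := by
    rintro ⟨n, hn, hn0⟩
    exact absurd (hint n hn0) (nonZeroDivisors.ne_zero hn)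
  let B := Localization T
  haveI : Nontrivial B := by
    refine ⟨1, 0, fun e => ?_⟩
    have : algebraMap R B 1 = 0 := by rw [map_one]; exact e
    obtain ⟨m, hm⟩ := (IsLocalization.map_eq_zero_iff T B 1).mp this
    rw [mul_one] at hm
    exact h0T (hm ▸ m.2)
  -- every nonzero integer is invertible in `B`
  have hunit : ∀ y : nonZeroDivisors ℤ, IsUnit ((Int.castRingHom B) y) := by
    intro y
    have mem : ((y : ℤ) : R) ∈ T := ⟨(y : ℤ), y.2, rfl⟩
    have hu := IsLocalization.map_units B (⟨((y : ℤ) : R), mem⟩ : T)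
    have he : (Int.castRingHom B) (y : ℤ) = algebraMap R B ((y : ℤ) : R) := by
      rw [eq_intCast, map_intCast]
    rw [he]
    exact hu
  let ρ : ℚ →+* B := IsLocalization.lift (M := nonZeroDivisors ℤ) (S := ℚ) hunit
  letI : Algebra ℚ B := ρ.toAlgebra
  have hρ : algebraMap ℚ B = ρ := rfl
  -- Step 3: `B` is a finite type `ℚ`-algebra.
  have halg : Algebra.FiniteType ℤ R := by
    have h2 : @Algebra.FiniteType ℤ R _ _ ((algebraMap ℤ R).toAlgebra) := hfg
    rwa [Subsingleton.elim ((algebraMap ℤ R).toAlgebra) (by infer_instance)] at h2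
  obtain ⟨s, hs⟩ := halg.out
  have hA : ∀ r : R, algebraMap R B r ∈ Algebra.adjoin ℚ (algebraMap R B '' ↑s) := by
    intro r
    have hr : r ∈ Algebra.adjoin ℤ (↑s : Set R) := hs ▸ trivial
    refine Algebra.adjoin_induction ?_ ?_ ?_ ?_ hr
    · intro x hx
      exact Algebra.subset_adjoin ⟨x, hx, rfl⟩
    · intro n
      have : algebraMap R B (algebraMap ℤ R n) = algebraMap ℚ B ((n : ℚ)) := by
        rw [hρ]
        simp [map_intCast]
      rw [this]
      exact Subalgebra.algebraMap_mem _ _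
    · intro x y _ _ hx hy
      rw [map_add]; exact add_mem hx hy
    · intro x y _ _ hx hy
      rw [map_mul]; exact mul_mem hx hy
  haveI hB : Algebra.FiniteType ℚ B := by
    refine ⟨⟨s.image (algebraMap R B), ?_⟩⟩
    rw [Finset.coe_image, eq_top_iff]
    rintro b -
    obtain ⟨⟨r, t⟩, rfl⟩ := IsLocalization.mk'_surjective T b
    obtain ⟨n, hn, hnt⟩ := t.2
    have hn0 : (n : ℚ) ≠ 0 := by
      exact_mod_cast nonZeroDivisors.ne_zero hn
    have hu : algebraMap R B (t : R) = algebraMap ℚ B ((n : ℚ)) := by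
      rw [hρ]
      have : (t : R) = ((n : ℤ) : R) := hnt.symm
      rw [this, map_intCast]
      simp [ρ, map_intCast]
    have hb : IsLocalization.mk' B r t =
        algebraMap R B r * algebraMap ℚ B ((n : ℚ)⁻¹) := by
      have hspec := IsLocalization.mk'_spec B r t
      have hinv : algebraMap R B (t : R) * algebraMap ℚ B ((n : ℚ)⁻¹) = 1 := by
        rw [hu, ← map_mul, mul_inv_cancel₀ hn0, map_one]
      calc IsLocalization.mk' B r t
          = IsLocalization.mk' B r t *
            (algebraMap R B (t : R) * algebraMap ℚ B ((n : ℚ)⁻¹)) := by rw [hinv, mul_one]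
        _ = (IsLocalization.mk' B r t * algebraMap R B (t : R)) *
            algebraMap ℚ B ((n : ℚ)⁻¹) := by ring
        _ = algebraMap R B r * algebraMap ℚ B ((n : ℚ)⁻¹) := by rw [hspec]
    show IsLocalization.mk' B r t ∈ _
    rw [hb]
    exact mul_mem (hA r) (Subalgebra.algebraMap_mem _ _)
  -- Step 4: maximal ideal, Nullstellensatz, embedding into `AlgebraicClosure ℚ`.
  obtain ⟨m, hm⟩ := Ideal.exists_maximal B
  letI : Field (B ⧸ m) := Ideal.Quotient.field m
  haveI : Algebra.FiniteType ℚ (B ⧸ m) :=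
    hB.of_surjective (Ideal.Quotient.mkₐ ℚ m) (Ideal.Quotient.mkₐ_surjective ℚ m)
  haveI : Module.Finite ℚ (B ⧸ m) := finite_of_finite_type_of_isJacobsonRing ℚ (B ⧸ m)
  haveI : Algebra.IsAlgebraic ℚ (B ⧸ m) := Algebra.IsAlgebraic.of_finite ℚ _
  let ψ : (B ⧸ m) →ₐ[ℚ] AlgebraicClosure ℚ := IsAlgClosed.lift
  exact ⟨(ψ.toRingHom.comp (Ideal.Quotient.mk m)).comp (algebraMap R B)⟩

/-!
STATEMENT 7: Let Y be a scheme of finite type over Spec ℤ.  If Y has an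
F̄_p-rational point for infinitely many primes p, then Y has a Q̄-rational
point.
-/
theorem point_over_Qbar_of_points_over_Fpbar
    (Y : Scheme.{0})
    (hft : LocallyOfFiniteType (AlgebraicGeometry.specZIsTerminal.from Y))
    (hqc : QuasiCompact (AlgebraicGeometry.specZIsTerminal.from Y))
    (hinf : {p : ℕ | p.Prime ∧ ∃ (K : Type) (_ : Field K) (_ : IsAlgClosed K)
        (_ : CharP K p), Nonempty (Spec (CommRingCat.of K) ⟶ Y)}.Infinite) :
    Nonempty (Spec (CommRingCat.of (AlgebraicClosure ℚ)) ⟶ Y) := by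
  classical
  haveI hcomp : CompactSpace Y := by
    constructor
    have := hqc.isCompact_preimage Set.univ isOpen_univ isCompact_univ
    simpa using this
  let 𝒰 := Y.affineCover.finiteSubcover
  haveI : Fintype 𝒰.I₀ := inferInstance
  letI I : ∀ j : 𝒰.I₀, IsAffine (𝒰.X j) := fun j => by
    exact inferInstance
  -- the coordinate rings of the finite affine cover
  let R : 𝒰.I₀ → CommRingCat := fun j => Γ(𝒰.X j, ⊤)
  -- Claim: each `F̄_p`-point of `Y` gives a ring hom from some `R j` to `K`.
  have claim1 : ∀ p ∈ {p : ℕ | p.Prime ∧ ∃ (K : Type) (_ : Field K) (_ : IsAlgClosed K)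
      (_ : CharP K p), Nonempty (Spec (CommRingCat.of K) ⟶ Y)},
      ∃ j : 𝒰.I₀, ∃ (K : Type) (_ : Field K) (_ : CharP K p),
        Nonempty ((R j : Type) →+* K) := by
    rintro p ⟨hp, K, fK, acK, chK, ⟨g⟩⟩
    let y : Y := g.base default
    refine ⟨𝒰.idx y, K, fK, chK, ?_⟩
    have hrange : Set.range g.base ⊆ Set.range (𝒰.f (𝒰.idx y)).base := by
      rintro _ ⟨t, rfl⟩
      have : t = default := Unique.eq_default t
      rw [this]
      exact 𝒰.covers y
    haveI := I (𝒰.idx y)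
    let g' : Spec (CommRingCat.of K) ⟶ 𝒰.X (𝒰.idx y) :=
      IsOpenImmersion.lift (𝒰.f (𝒰.idx y)) g hrange
    let g'' : Spec (CommRingCat.of K) ⟶ Spec (R (𝒰.idx y)) :=
      g' ≫ (Scheme.isoSpec (𝒰.X (𝒰.idx y))).hom
    exact ⟨(Spec.preimage g'').hom⟩
  choose jmap hjmap using claim1
  haveI : Infinite ↥{p : ℕ | p.Prime ∧ ∃ (K : Type) (_ : Field K) (_ : IsAlgClosed K)
      (_ : CharP K p), Nonempty (Spec (CommRingCat.of K) ⟶ Y)} :=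
    Set.infinite_coe_iff.mpr hinf
  obtain ⟨j0, hj0⟩ := Finite.exists_infinite_fiber (fun q : ↥{p : ℕ | p.Prime ∧
      ∃ (K : Type) (_ : Field K) (_ : IsAlgClosed K) (_ : CharP K p),
      Nonempty (Spec (CommRingCat.of K) ⟶ Y)} => jmap q.1 q.2)
  -- the set of primes hitting the chart `j0` is infinite
  have hinf' : {p : ℕ | p.Prime ∧ ∃ (K : Type) (_ : Field K) (_ : CharP K p),
      Nonempty ((R j0 : Type) →+* K)}.Infinite := by
    refine Set.infinite_of_injective_forall_mem
      (f := fun q : ↥((fun q : ↥{p : ℕ | p.Prime ∧ ∃ (K : Type) (_ : Field K)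
        (_ : IsAlgClosed K) (_ : CharP K p),
        Nonempty (Spec (CommRingCat.of K) ⟶ Y)} => jmap q.1 q.2) ⁻¹' {j0}) => (q.1.1 : ℕ))
      ?_ ?_
    · intro a b hab
      exact Subtype.ext (Subtype.ext hab)
    · rintro ⟨⟨p, hp⟩, hq⟩
      have : jmap p hp = j0 := hq
      obtain ⟨K, fK, chK, hK⟩ := hjmap p hp
      rw [this] at hK
      exact ⟨hp.1, K, fK, chK, hK⟩
  -- `R j0` is of finite type over `ℤ`.
  haveI := I j0
  haveI := hft
  let E : Spec (R j0) ⟶ Spec (CommRingCat.of ℤ) :=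
    (Scheme.isoSpec (𝒰.X j0)).inv ≫ 𝒰.f j0 ≫ AlgebraicGeometry.specZIsTerminal.from Y
  have hE : LocallyOfFiniteType E := inferInstance
  have hE2 : E = Spec.map (CommRingCat.ofHom (algebraMap ℤ (R j0))) :=
    AlgebraicGeometry.specZIsTerminal.hom_ext _ _
  rw [hE2] at hE
  have hftR : RingHom.FiniteType (CommRingCat.ofHom (algebraMap ℤ (R j0))).hom :=
    (HasRingHomProperty.Spec_iff (P := @LocallyOfFiniteType)).mp hE
  obtain ⟨f⟩ := exists_ringHom_to_Qbar (R j0) hftR hinf'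
  exact ⟨Spec.map (CommRingCat.ofHom f) ≫ (Scheme.isoSpec (𝒰.X j0)).inv ≫ 𝒰.f j0⟩
end

section
/- Let P(t) ∈ ℤ[t] be a monic polynomial of even degree n whose complex roots all have absolute value 1 and are closed under complex conjugation (P has real coefficients). If not all roots of P are roots of unity, then the number of roots of P (counted with multiplicity) that are roots of unity is even. -/
open scoped Classical in
/-- The number of complex roots of `P` (with multiplicity) that are roots of unity. -/
noncomputable def rootOfUnityCount (P : Polynomial ℤ) : ℕ :=
  Multiset.card ((P.aroots ℂ).filter fun z => ∃ m : ℕ, 0 < m ∧ z ^ m = 1)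

/-!
STATEMENT 13: Let P(t) ∈ ℤ[t] be a monic polynomial of even degree n whose
complex roots all have absolute value 1 and are closed under complex
conjugation.  If not all roots of P are roots of unity, then the number of
roots of P (with multiplicity) that are roots of unity is even.
-/
theorem even_number_of_roots_of_unity
    (P : Polynomial ℤ) (hmonic : P.Monic)
    (n : ℕ) (hn : Even n) (hdeg : P.natDegree = n)
    (habs : ∀ z ∈ P.aroots ℂ, ‖z‖ = 1)          -- all roots on unit circle
    (hconj : ∀ z : ℂ, (P.aroots ℂ).count (starRingEnd ℂ z) = (P.aroots ℂ).count z)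
      -- roots closed under complex conjugation (with multiplicity)
    (hnotall : ¬ ∀ z ∈ P.aroots ℂ, ∃ m : ℕ, 0 < m ∧ z ^ m = 1) :
    Even (rootOfUnityCount P) := by
  classical
  set R := P.aroots ℂ with hR
  set p : ℂ → Prop := fun z => ∃ m : ℕ, 0 < m ∧ z ^ m = 1 with hp
  -- total number of roots is n
  have hQmonic : (P.map (algebraMap ℤ ℂ)).Monic := hmonic.map _
  have hsplits : (P.map (algebraMap ℤ ℂ)).Splits :=
    IsAlgClosed.splits _
  have hcardR : Multiset.card R = n := by
    have := Polynomial.splits_iff_card_roots.mp hsplits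
    rw [hR, Polynomial.aroots_def, this, hmonic.natDegree_map, hdeg]
  -- the predicate p is closed under conjugation
  have hpconj : ∀ z : ℂ, p (starRingEnd ℂ z) ↔ p z := by
    intro z
    constructor <;> rintro ⟨m, hm, hzm⟩ <;> refine ⟨m, hm, ?_⟩
    · have : starRingEnd ℂ (z ^ m) = 1 := by rw [map_pow]; exact hzm
      have := congrArg (starRingEnd ℂ) this
      simpa using this
    · rw [← map_pow, hzm, map_one]
  -- count of conj in the non-root-of-unity part
  set T := R.filter (fun z => ¬ p z) with hT
  have hTcount : ∀ z : ℂ, T.count (starRingEnd ℂ z) = T.count z := by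
    intro z
    rw [hT, Multiset.count_filter, Multiset.count_filter]
    by_cases h : p z
    · simp [h, (hpconj z).mpr h]
    · have h' : ¬ p (starRingEnd ℂ z) := fun hc => h ((hpconj z).mp hc)
      simp [h, h', hconj z]
  -- elements of T are not real
  have hTim : ∀ z ∈ T, z.im ≠ 0 := by
    intro z hz him
    have hzR : z ∈ R := Multiset.mem_of_mem_filter hz
    have hznp : ¬ p z := (Multiset.mem_filter.mp hz).2
    have habsz : ‖z‖ = 1 := habs z hzR
    have hre : z = (z.re : ℂ) := by
      apply Complex.ext <;> simp [him]
    have : |z.re| = 1 := by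
      rw [hre] at habsz; simpa using habsz
    rcases abs_eq (by norm_num : (0:ℝ) ≤ 1) |>.mp this with h1 | h1
    · exact hznp ⟨1, one_pos, by rw [hre, h1]; norm_num⟩
    · exact hznp ⟨2, two_pos, by rw [hre, h1]; norm_num⟩
  -- total count identity, then forget T's definition
  have hsum : rootOfUnityCount P + Multiset.card T = n := by
    rw [rootOfUnityCount, ← hcardR, hT, ← Multiset.card_add,
      Multiset.filter_add_not]
  clear hT
  clear_value T
  -- split T into upper and lower half-plane parts
  set T1 := T.filter (fun z => 0 < z.im) with hT1
  set T2 := T.filter (fun z => ¬ 0 < z.im) with hT2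
  have hsplit : T1 + T2 = T := Multiset.filter_add_not _ _
  have hmapT1 : T1.map (starRingEnd ℂ) = T2 := by
    ext w
    have hcm : Multiset.count w (T1.map (starRingEnd ℂ)) = T1.count (starRingEnd ℂ w) := by
      conv_lhs => rw [show w = starRingEnd ℂ (starRingEnd ℂ w) from (Complex.conj_conj w).symm]
      exact Multiset.count_map_eq_count' _ _ (starRingEnd ℂ).injective _
    rw [hcm, hT1, hT2, Multiset.count_filter, Multiset.count_filter]
    have him : (starRingEnd ℂ w).im = -w.im := by simp
    by_cases hw : 0 < w.im
    · have h1 : ¬ 0 < (starRingEnd ℂ w).im := by rw [him]; linarith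
      rw [if_neg h1, if_neg (not_not_intro hw)]
    · by_cases hw0 : w.im = 0
      · have hwT : T.count w = 0 := by
          rw [Multiset.count_eq_zero]
          intro hwm; exact hTim w hwm hw0
        have h1 : ¬ 0 < (starRingEnd ℂ w).im := by rw [him, hw0]; simp
        rw [if_neg h1, if_pos hw, hwT]
      · have hneg : w.im < 0 := lt_of_le_of_ne (not_lt.mp hw) hw0
        have h1 : 0 < (starRingEnd ℂ w).im := by rw [him]; linarith
        rw [if_pos h1, if_pos hw, hTcount w]
  have hTeven : Even (Multiset.card T) := by
    rw [← hsplit, Multiset.card_add, ← hmapT1, Multiset.card_map]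
    exact ⟨Multiset.card T1, rfl⟩
  -- conclude
  have := hn
  rw [← hsum] at this
  rcases Nat.even_add.mp this with h
  exact h.mpr hTeven
end
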